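/- Let S_1, …, S_J ∈ ℂ^{I×I} be Hermitian positive semidefinite and ρ > 0. Define f : [0,∞)^J → [0,∞)^J by f(δ)_k = (1/I)·tr( S_k · ( (1/I) Σ_{j=1}^J S_j/(1+δ_j) + ρ I_I )^{−1} ). Then f is monotone: if 0 ≤ δ_j ≤ δ'_j for all j, then f(δ)_k ≤ f(δ')_k for all k. -/

import Mathlib

open Matrix
open scoped ComplexOrder

/-- The deterministic-equivalent resolvent matrix
`T(ρ, I, {S_j}; δ) = ( (1/I) ∑_j S_j/(1+δ_j) + ρ I_I )⁻¹`. -/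
noncomputable def detEquivT {I J : ℕ} (S : Fin J → Matrix (Fin I) (Fin I) ℂ)
    (ρ : ℝ) (δ : Fin J → ℝ) : Matrix (Fin I) (Fin I) ℂ :=
  (((I : ℂ))⁻¹ • (∑ j, ((((1 + δ j)⁻¹ : ℝ)) : ℂ) • S j) + (ρ : ℂ) • 1)⁻¹

/-- The fixed-point iteration map `f(δ)_k = (1/I) tr( S_k T(ρ, I, {S_j}; δ) )`
(a real number, expressed via the real part of the complex trace). -/
noncomputable def detEquivF {I J : ℕ} (S : Fin J → Matrix (Fin I) (Fin I) ℂ)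
    (ρ : ℝ) (δ : Fin J → ℝ) (k : Fin J) : ℝ :=
  ((I : ℝ))⁻¹ * ((S k * detEquivT S ρ δ).trace).re


namespace DetEquivAux

variable {n : Type*} [Fintype n] [DecidableEq n]

open scoped MatrixOrder

lemma psd_smul {c : ℝ} (hc : 0 ≤ c) {A : Matrix n n ℂ} (hA : A.PosSemidef) :
    ((c : ℂ) • A).PosSemidef := by
  refine PosSemidef.of_dotProduct_mulVec_nonneg ?_ fun x => ?_
  · unfold Matrix.IsHermitian
    rw [conjTranspose_smul, hA.1.eq]
    simp [Complex.star_def]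
  · rw [smul_mulVec, dotProduct_smul]
    exact smul_nonneg (by exact_mod_cast Complex.zero_le_real.mpr hc) (hA.dotProduct_mulVec_nonneg x)

lemma psd_diag_nonneg {A : Matrix n n ℂ} (hA : A.PosSemidef) (i : n) : 0 ≤ A i i := by
  have := hA.dotProduct_mulVec_nonneg (Pi.single i 1)
  simpa [dotProduct, mulVec, Pi.single_apply, Finset.sum_ite_eq] using this

lemma psd_trace_nonneg {A : Matrix n n ℂ} (hA : A.PosSemidef) : 0 ≤ A.trace :=
  Finset.sum_nonneg fun i _ => psd_diag_nonneg hA i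

lemma sqrt_det_isUnit {A : Matrix n n ℂ} (hA : A.PosDef) :
    IsUnit (CFC.sqrt A).det := by
  have h : CFC.sqrt A * CFC.sqrt A = A := CFC.sqrt_mul_sqrt_self A hA.posSemidef.nonneg
  have : (CFC.sqrt A).det * (CFC.sqrt A).det = A.det := by
    rw [← det_mul, h]
  refine isUnit_iff_ne_zero.mpr fun h0 => ?_
  exact hA.det_pos.ne' (by rw [← this, h0, mul_zero])

lemma trace_re_nonneg_of_psd {A B : Matrix n n ℂ} (hA : A.PosSemidef) (hB : B.PosSemidef) :
    0 ≤ ((A * B).trace).re := by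
  set N := CFC.sqrt A with hN
  have hNH : Nᴴ = N := (CFC.sqrt_nonneg A).posSemidef.1
  have key : (A * B).trace = (Nᴴ * B * N).trace := by
    rw [hNH, ← CFC.sqrt_mul_sqrt_self A hA.nonneg, trace_mul_comm, ← Matrix.mul_assoc, trace_mul_comm,
      Matrix.mul_assoc]
  have hpsd : (Nᴴ * B * N).PosSemidef := hB.conjTranspose_mul_mul_same N
  have := psd_trace_nonneg hpsd
  rw [key]
  exact (Complex.le_def.mp this).1

/-- If `M` is positive definite and `M - 1` is PSD then `1 - M⁻¹` is PSD. -/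
lemma one_sub_inv_psd {M : Matrix n n ℂ} (hM : M.PosDef) (h : (M - 1).PosSemidef) :
    ((1 : Matrix n n ℂ) - M⁻¹).PosSemidef := by
  set N := CFC.sqrt M with hNdef
  have hNN : N * N = M := CFC.sqrt_mul_sqrt_self M hM.posSemidef.nonneg
  have hNdet : IsUnit N.det := sqrt_det_isUnit hM
  have hNiH : (N⁻¹)ᴴ = N⁻¹ := ((CFC.sqrt_nonneg M).posSemidef.1.inv).eq
  have h1 : N⁻¹ * M * N⁻¹ = 1 := by
    rw [← hNN, Matrix.mul_assoc (N⁻¹) (N * N) (N⁻¹), Matrix.mul_assoc N N (N⁻¹),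
      mul_nonsing_inv _ hNdet, Matrix.mul_one, nonsing_inv_mul _ hNdet]
  have h2 : N⁻¹ * N⁻¹ = M⁻¹ := by rw [← hNN, Matrix.mul_inv_rev]
  have key : (1 : Matrix n n ℂ) - M⁻¹ = (N⁻¹)ᴴ * (M - 1) * N⁻¹ := by
    have e : (N⁻¹) * (M - 1) * N⁻¹ = N⁻¹ * M * N⁻¹ - N⁻¹ * N⁻¹ := by noncomm_ring
    rw [hNiH, e, h1, h2]
  rw [key]
  exact h.conjTranspose_mul_mul_same _

lemma posDef_conj {B C : Matrix n n ℂ} (hB : B.PosDef) (hC : IsUnit C.det) :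
    (Cᴴ * B * C).PosDef := by
  refine PosDef.of_dotProduct_mulVec_pos (isHermitian_conjTranspose_mul_mul C hB.1) fun x hx => ?_
  have hinj : Function.Injective C.mulVec :=
    mulVec_injective_iff_isUnit.mpr (isUnit_iff_isUnit_det _ |>.mpr hC)
  have hx' : C *ᵥ x ≠ 0 := fun h0 => hx (hinj (by simpa using h0))
  simpa only [star_mulVec, dotProduct_mulVec, vecMul_vecMul] using hB.dotProduct_mulVec_pos hx'

/-- Inversion is antitone on positive definite matrices. -/
lemma inv_antitone {A B : Matrix n n ℂ} (hA : A.PosDef) (hB : B.PosDef)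
    (h : (B - A).PosSemidef) : (A⁻¹ - B⁻¹).PosSemidef := by
  set R := CFC.sqrt A with hRdef
  have hRR : R * R = A := CFC.sqrt_mul_sqrt_self A hA.posSemidef.nonneg
  have hRdet : IsUnit R.det := sqrt_det_isUnit hA
  have hRidet : IsUnit (R⁻¹).det := isUnit_nonsing_inv_det _ hRdet
  have hRiH : (R⁻¹)ᴴ = R⁻¹ := ((CFC.sqrt_nonneg A).posSemidef.1.inv).eq
  have h1 : R⁻¹ * A * R⁻¹ = 1 := by
    rw [← hRR, Matrix.mul_assoc (R⁻¹) (R * R) (R⁻¹), Matrix.mul_assoc R R (R⁻¹),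
      mul_nonsing_inv _ hRdet, Matrix.mul_one, nonsing_inv_mul _ hRdet]
  set M := R⁻¹ * B * R⁻¹ with hMdef
  have hM : M.PosDef := by
    have := posDef_conj hB hRidet
    rwa [hRiH] at this
  have hM1 : (M - 1).PosSemidef := by
    have : M - 1 = (R⁻¹)ᴴ * (B - A) * R⁻¹ := by
      have e : (R⁻¹) * (B - A) * R⁻¹ = R⁻¹ * B * R⁻¹ - R⁻¹ * A * R⁻¹ := by noncomm_ring
      rw [hRiH, e, h1, hMdef]
    rw [this]
    exact h.conjTranspose_mul_mul_same _
  have h2 := one_sub_inv_psd hM hM1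
  have hMinv : M⁻¹ = R * B⁻¹ * R := by
    rw [hMdef, Matrix.mul_inv_rev, Matrix.mul_inv_rev, nonsing_inv_nonsing_inv _ hRdet,
      Matrix.mul_assoc]
  have key : A⁻¹ - B⁻¹ = (R⁻¹)ᴴ * ((1 : Matrix n n ℂ) - M⁻¹) * R⁻¹ := by
    have e : (R⁻¹) * ((1 : Matrix n n ℂ) - M⁻¹) * R⁻¹ = R⁻¹ * 1 * R⁻¹ - R⁻¹ * M⁻¹ * R⁻¹ := by
      noncomm_ring
    rw [hRiH, e, hMinv, Matrix.mul_one]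
    congr 1
    · rw [← Matrix.mul_inv_rev, hRR]
    · rw [← Matrix.mul_assoc, ← Matrix.mul_assoc, nonsing_inv_mul _ hRdet, Matrix.one_mul,
        Matrix.mul_assoc, mul_nonsing_inv _ hRdet, Matrix.mul_one]
  rw [key]
  exact h2.conjTranspose_mul_mul_same _

lemma posDef_smul_one {ρ : ℝ} (hρ : 0 < ρ) : ((ρ : ℂ) • (1 : Matrix n n ℂ)).PosDef := by
  refine PosDef.of_dotProduct_mulVec_pos ?_ fun x hx => ?_
  · unfold Matrix.IsHermitian
    rw [conjTranspose_smul, conjTranspose_one]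
    simp [Complex.star_def]
  · rw [smul_mulVec, dotProduct_smul, one_mulVec]
    have h1 : (0 : ℂ) < (ρ : ℂ) := by exact_mod_cast Complex.zero_lt_real.mpr hρ
    have h2 : (0 : ℂ) < star x ⬝ᵥ x := by
      simpa using dotProduct_star_self_pos_iff.mpr hx
    rw [smul_eq_mul]
    exact mul_pos h1 h2

end DetEquivAux


open DetEquivAux in
/-- **Monotonicity of the fixed-point iteration map.**
For Hermitian positive semidefinite `S_1, …, S_J ∈ ℂ^{I×I}` and `ρ > 0`, the map
`f(δ)_k = (1/I) tr( S_k ((1/I) ∑_j S_j/(1+δ_j) + ρ I_I)⁻¹ )` is monotone on `[0,∞)^J`: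
if `0 ≤ δ_j ≤ δ'_j` for all `j`, then `f(δ)_k ≤ f(δ')_k` for all `k`. -/
theorem detEquivF_monotone {I J : ℕ} (hI : 0 < I)
    (S : Fin J → Matrix (Fin I) (Fin I) ℂ) (hS : ∀ j, (S j).PosSemidef)
    (ρ : ℝ) (hρ : 0 < ρ)
    (δ δ' : Fin J → ℝ) (hδ : ∀ j, 0 ≤ δ j) (hle : ∀ j, δ j ≤ δ' j) :
    ∀ k, detEquivF S ρ δ k ≤ detEquivF S ρ δ' k := by
  classical
  set A : Matrix (Fin I) (Fin I) ℂ :=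
    ((I : ℂ))⁻¹ • (∑ j, ((((1 + δ j)⁻¹ : ℝ)) : ℂ) • S j) + (ρ : ℂ) • 1 with hAdef
  set A' : Matrix (Fin I) (Fin I) ℂ :=
    ((I : ℂ))⁻¹ • (∑ j, ((((1 + δ' j)⁻¹ : ℝ)) : ℂ) • S j) + (ρ : ℂ) • 1 with hA'def
  have hIcast : ((I : ℂ))⁻¹ = ((((I : ℝ))⁻¹ : ℝ) : ℂ) := by push_cast; ring
  have hPD : ∀ (d : Fin J → ℝ), (∀ j, 0 ≤ d j) →
      (((I : ℂ))⁻¹ • (∑ j, ((((1 + d j)⁻¹ : ℝ)) : ℂ) • S j) + (ρ : ℂ) • 1).PosDef := by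
    intro d hd
    refine Matrix.PosDef.posSemidef_add ?_ (posDef_smul_one hρ)
    rw [hIcast]
    refine psd_smul (by positivity) ?_
    refine Finset.sum_induction _ _ (fun a b ha hb => ha.add hb) Matrix.PosSemidef.zero ?_
    intro j _
    exact psd_smul (by have := hd j; positivity) (hS j)
  have hA : A.PosDef := hPD δ hδ
  have hA' : A'.PosDef := hPD δ' (fun j => (hδ j).trans (hle j))
  have hdiff : (A - A').PosSemidef := by
    have e : A - A' = ((I : ℂ))⁻¹ •
        ∑ j, (((((1 + δ j)⁻¹ - (1 + δ' j)⁻¹ : ℝ)) : ℂ)) • S j := by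
      rw [hAdef, hA'def, add_sub_add_right_eq_sub, ← smul_sub, ← Finset.sum_sub_distrib]
      congr 1
      refine Finset.sum_congr rfl fun j _ => ?_
      rw [← sub_smul]
      push_cast
      ring_nf
    rw [e, hIcast]
    refine psd_smul (by positivity) ?_
    refine Finset.sum_induction _ _ (fun a b ha hb => ha.add hb) Matrix.PosSemidef.zero ?_
    intro j _
    refine psd_smul ?_ (hS j)
    have h1 : (0:ℝ) < 1 + δ j := by linarith [hδ j]
    have h2 : (1 + δ' j)⁻¹ ≤ (1 + δ j)⁻¹ := by
      apply inv_anti₀ h1; linarith [hle j]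
    linarith
  have hkey : (A'⁻¹ - A⁻¹).PosSemidef := inv_antitone hA' hA hdiff
  intro k
  show ((I : ℝ))⁻¹ * ((S k * A⁻¹).trace).re ≤ ((I : ℝ))⁻¹ * ((S k * A'⁻¹).trace).re
  rw [← sub_nonneg, ← mul_sub]
  refine mul_nonneg (by positivity) ?_
  rw [← Complex.sub_re, ← Matrix.trace_sub, ← Matrix.mul_sub]
  exact trace_re_nonneg_of_psd (hS k) hkey
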